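/- arXiv:1809.07459 — 2 statements merged into one kernel-verified Lean document; each statement's English description precedes it below -/
import Mathlib

section
/- For any positive integers k and m, and every natural number n, p(n + m^(k-1)·k!, k) ≡ p(n, k) (mod m); that is, m^(k-1)·k! is a period of p(·,k) modulo m. -/
/-- `p n k` is the number of partitions of `n` into parts each of size at most `k`
(with `p 0 k = 1`). -/
def p (n k : ℕ) : ℕ :=
  (Finset.univ.filter (fun P : n.Partition => ∀ i ∈ P.parts, i ≤ k)).card


-- base case
lemma p_one (n : ℕ) : p n 1 = 1 := by
  rw [p]
  rw [Finset.card_eq_one]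
  refine ⟨⟨Multiset.replicate n 1, ?_, by simp⟩, ?_⟩
  · intro i hi
    rw [Multiset.eq_of_mem_replicate hi]; norm_num
  · ext P
    simp only [Finset.mem_filter, Finset.mem_univ, true_and, Finset.mem_singleton]
    constructor
    · intro h
      ext1
      simp only
      have : P.parts = Multiset.replicate n 1 := by
        rw [Multiset.eq_replicate]
        constructor
        · have hsum := P.parts_sum
          have : ∀ x ∈ P.parts, x = 1 := fun x hx =>
            le_antisymm (h x hx) (P.parts_pos hx)
          calc Multiset.card P.parts = (Multiset.map (fun _ => (1:ℕ)) P.parts).sum := by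
                simp [Multiset.sum_replicate]
              _ = P.parts.sum := by
                rw [Multiset.map_congr rfl fun x hx => (this x hx).symm, Multiset.map_id']
              _ = P.parts.sum := rfl
              _ = n := hsum
        · exact fun b hb => le_antisymm (h b hb) (P.parts_pos hb)
      exact this
    · rintro rfl
      intro i hi
      rw [Multiset.eq_of_mem_replicate hi]

-- recurrence
lemma p_rec (n k : ℕ) (hk : 1 ≤ k) : p (n + k) k = p (n + k) (k - 1) + p n k := by
  classical
  rw [p, ← Finset.card_filter_add_card_filter_not (p := fun P => k ∈ P.parts)]
  rw [add_comm]
  congr 1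
  · -- partitions not containing k ↔ parts ≤ k - 1
    rw [p, Finset.filter_filter]
    apply Finset.card_nbij id
    · intro P hP
      simp only [Finset.mem_coe, Finset.mem_filter, Finset.mem_univ, true_and] at hP ⊢
      intro i hi
      have h1 := hP.1 i hi
      have h2 : i ≠ k := fun h => hP.2 (h ▸ hi)
      omega
    · intro P₁ h₁ P₂ h₂ h; exact h
    · intro P hP
      simp only [Finset.mem_coe, Finset.mem_filter, Finset.mem_univ, true_and] at hP
      refine ⟨P, ?_, rfl⟩
      simp only [Finset.mem_coe, Finset.mem_filter, Finset.mem_univ, true_and]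
      constructor
      · intro i hi; have := hP i hi; omega
      · intro hks; have := hP k hks; omega
  · -- partitions containing k ↔ partitions of n
    rw [p, Finset.filter_filter]
    refine Finset.card_bij'
      (fun P hP => (⟨P.parts.erase k, ?_, ?_⟩ : n.Partition))
      (fun Q _ => (⟨k ::ₘ Q.parts, ?_, ?_⟩ : (n + k).Partition)) ?_ ?_ ?_ ?_
    · intro i hi
      exact P.parts_pos (Multiset.mem_of_mem_erase hi)
    · simp only [Finset.mem_filter, Finset.mem_univ, true_and] at hP
      have hk' : k ∈ P.parts := hP.2
      have := P.parts_sum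
      have hc : k ::ₘ P.parts.erase k = P.parts := Multiset.cons_erase hk'
      have : (k ::ₘ P.parts.erase k).sum = n + k := by rw [hc, P.parts_sum]
      rw [Multiset.sum_cons] at this
      omega
    · intro i hi
      rcases Multiset.mem_cons.mp hi with rfl | h
      · omega
      · exact Q.parts_pos h
    · rw [Multiset.sum_cons, Q.parts_sum]; omega
    · intro P hP
      simp only [Finset.mem_filter, Finset.mem_univ, true_and] at hP ⊢
      intro i hi
      exact hP.1 i (Multiset.mem_of_mem_erase hi)
    · intro Q hQ
      simp only [Finset.mem_filter, Finset.mem_univ, true_and] at hQ ⊢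
      refine ⟨?_, Multiset.mem_cons_self _ _⟩
      intro i hi
      rcases Multiset.mem_cons.mp hi with rfl | h
      · exact le_refl _
      · exact hQ i h
    · intro P hP
      simp only [Finset.mem_filter, Finset.mem_univ, true_and] at hP
      ext1
      simp only [Multiset.cons_erase hP.2]
    · intro Q hQ
      ext1
      simp only [Multiset.erase_cons_head]

lemma p_iter (k : ℕ) (hk : 1 ≤ k) (c n : ℕ) :
    p (n + c * k) k = p n k + ∑ j ∈ Finset.range c, p (n + (j + 1) * k) (k - 1) := by
  induction c with
  | zero => simp
  | succ c ih =>
    have h1 : n + (c + 1) * k = (n + c * k) + k := by ring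
    rw [h1, p_rec _ _ hk, ih, Finset.sum_range_succ]
    have h2 : n + c * k + k = n + (c + 1) * k := by ring
    rw [h2]
    ring

lemma key (k : ℕ) (hk : 1 ≤ k) (m : ℕ) (hm : 0 < m) (n : ℕ) :
    p (n + m ^ (k - 1) * Nat.factorial k) k ≡ p n k [MOD m] := by
  induction k, hk using Nat.le_induction generalizing n with
  | base => simp [p_one, Nat.ModEq.refl]
  | succ k hk IH =>
    set T' : ℕ := m ^ (k - 1) * Nat.factorial k with hT'
    have period_mul : ∀ c n, p (n + c * T') k ≡ p n k [MOD m] := by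
      intro c
      induction c with
      | zero => simp [Nat.ModEq.refl]
      | succ c ih2 =>
        intro n
        have h1 : n + (c + 1) * T' = (n + c * T') + T' := by ring
        rw [h1]
        exact (IH (n + c * T')).trans (ih2 n)
    have harg : m ^ (k + 1 - 1) * Nat.factorial (k + 1) = (m * T') * (k + 1) := by
      rw [hT', Nat.factorial_succ]
      have : m ^ (k + 1 - 1) = m * m ^ (k - 1) := by
        rw [Nat.add_sub_cancel, ← pow_succ']
        congr 1
        omega
      rw [this]
      ring
    rw [← ZMod.natCast_eq_natCast_iff]
    rw [harg, p_iter (k + 1) (by omega), Nat.add_sub_cancel]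
    have hblock : ∀ a j : ℕ,
        ((p (n + (a * T' + j + 1) * (k + 1)) k : ℕ) : ZMod m)
          = ((p (n + (j + 1) * (k + 1)) k : ℕ) : ZMod m) := by
      intro a j
      have h : n + (a * T' + j + 1) * (k + 1) = (n + (j + 1) * (k + 1)) + (a * (k + 1)) * T' := by
        ring
      rw [h]
      exact (ZMod.natCast_eq_natCast_iff _ _ _).mpr (period_mul _ _)
    have hsum : ∀ a : ℕ,
        (∑ j ∈ Finset.range (a * T'), ((p (n + (j + 1) * (k + 1)) k : ℕ) : ZMod m))
          = (a : ZMod m) * ∑ j ∈ Finset.range T', ((p (n + (j + 1) * (k + 1)) k : ℕ) : ZMod m) := by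
      intro a
      induction a with
      | zero => simp
      | succ a ih =>
        rw [add_mul, one_mul, Finset.sum_range_add, ih]
        have h2 : ∑ j ∈ Finset.range T', ((p (n + (a * T' + j + 1) * (k + 1)) k : ℕ) : ZMod m)
            = ∑ j ∈ Finset.range T', ((p (n + (j + 1) * (k + 1)) k : ℕ) : ZMod m) :=
          Finset.sum_congr rfl fun j _ => hblock a j
        rw [h2]
        push_cast
        ring
    push_cast
    rw [hsum m]
    simp


theorem stmt_1 (k m : ℕ) (hk : 0 < k) (hm : 0 < m) (n : ℕ) :
    p (n + m ^ (k - 1) * Nat.factorial k) k ≡ p n k [MOD m] := by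
  exact key k hk m hm n
end

section
/- For every positive integer k, the odd density of p(·,k) is at least 2/(k(k+1)): lim_{N→∞} #{n ≤ N : p(n,k) is odd}/N ≥ 2/(k(k+1)). -/
lemma p_zero (k : ℕ) : p 0 k = 1 := by
  rw [p]
  rw [Finset.filter_true_of_mem]
  · simp [Finset.card_univ]
  · intro P _ i hi
    simp at hi

lemma p_nil (n : ℕ) (hn : n ≠ 0) : p n 0 = 0 := by
  rw [p, Finset.card_eq_zero, Finset.filter_eq_empty_iff]
  intro P _ h
  apply hn
  rw [← P.parts_sum]
  have : P.parts = 0 := by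
    rw [Multiset.eq_zero_iff_forall_notMem]
    intro i hi
    have h1 := h i hi
    have h2 := P.parts_pos hi
    omega
  simp [this]

lemma parts_le_sum {n : ℕ} (P : n.Partition) {i : ℕ} (hi : i ∈ P.parts) : i ≤ n := by
  have := Multiset.single_le_sum (fun x _ => Nat.zero_le x) i hi
  rwa [P.parts_sum] at this

lemma p_succ_of_lt (n k : ℕ) (h : n < k + 1) : p n (k + 1) = p n k := by
  rw [p, p]
  congr 1
  apply Finset.filter_congr
  intro P _
  constructor
  · intro _ i hi
    have := parts_le_sum P hi
    omega
  · intro hP i hi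
    exact (hP i hi).trans (by omega)

lemma p_succ (n k : ℕ) (h : k + 1 ≤ n) :
    p n (k + 1) = p n k + p (n - (k + 1)) (k + 1) := by
  classical
  rw [p, p, p]
  rw [← Finset.card_filter_add_card_filter_not
      (s := Finset.univ.filter (fun P : n.Partition => ∀ i ∈ P.parts, i ≤ k + 1))
      (p := fun P : n.Partition => (k+1) ∈ P.parts)]
  rw [add_comm]
  congr 1
  · -- no part equal to k+1
    rw [Finset.filter_filter]
    congr 1
    apply Finset.filter_congr
    intro P _
    constructor
    · rintro ⟨h1, h2⟩ i hi
      have h3 := h1 i hi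
      rcases Nat.lt_or_ge i (k+1) with h4 | h4
      · omega
      · exfalso
        have h5 : i = k + 1 := by omega
        exact h2 (h5 ▸ hi)
    · intro hP
      exact ⟨fun i hi => (hP i hi).trans (by omega), fun hmem => by have := hP _ hmem; omega⟩
  · -- has a part equal to k+1
    rw [Finset.filter_filter]
    refine Finset.card_bij'
      (fun P hP => Nat.Partition.mk (P.parts.erase (k+1))
        (fun {i} hi => P.parts_pos (Multiset.mem_of_mem_erase hi))
        (by
          have hm : (k+1) ∈ P.parts := (Finset.mem_filter.mp hP).2.2
          have h1 : ((k+1) ::ₘ P.parts.erase (k+1)).sum = P.parts.sum := by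
            rw [Multiset.cons_erase hm]
          rw [Multiset.sum_cons, P.parts_sum] at h1
          omega))
      (fun Q _ => Nat.Partition.mk ((k+1) ::ₘ Q.parts)
        (fun {i} hi => by
          rcases Multiset.mem_cons.mp hi with h1 | h1
          · omega
          · exact Q.parts_pos h1)
        (by rw [Multiset.sum_cons, Q.parts_sum]; omega))
      ?_ ?_ ?_ ?_
    · intro P hP
      simp only [Finset.mem_filter, Finset.mem_univ, true_and] at hP ⊢
      intro i hi
      exact hP.1 i (Multiset.mem_of_mem_erase hi)
    · intro Q hQ
      simp only [Finset.mem_filter, Finset.mem_univ, true_and] at hQ ⊢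
      constructor
      · intro i hi
        rcases Multiset.mem_cons.mp hi with h1 | h1
        · omega
        · exact hQ i h1
      · exact Multiset.mem_cons_self _ _
    · intro P hP
      simp only [Finset.mem_filter, Finset.mem_univ, true_and] at hP
      apply Nat.Partition.ext
      exact Multiset.cons_erase hP.2
    · intro Q hQ
      apply Nat.Partition.ext
      exact Multiset.erase_cons_head _ _



open PowerSeries Polynomial

noncomputable def Fk (k : ℕ) : PowerSeries (ZMod 2) := PowerSeries.mk fun n => (p n k : ZMod 2)

noncomputable def gp (k : ℕ) : Polynomial (ZMod 2) :=
  ∏ i ∈ Finset.range k, (Polynomial.X ^ (i + 1) + 1)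

lemma step (k : ℕ) : ((Polynomial.X ^ (k+1) + 1 : Polynomial (ZMod 2)) : PowerSeries (ZMod 2)) * Fk (k+1) = Fk k := by
  ext n
  rw [Polynomial.coe_add, Polynomial.coe_pow, Polynomial.coe_X, Polynomial.coe_one,
    add_mul, one_mul, map_add]
  rcases Nat.lt_or_ge n (k+1) with h | h
  · rw [PowerSeries.coeff_X_pow_mul']
    simp only [not_le.mpr h, if_false, zero_add, Fk, PowerSeries.coeff_mk]
    rw [p_succ_of_lt n k h]
  · rw [PowerSeries.coeff_X_pow_mul', if_pos h]
    simp only [Fk, PowerSeries.coeff_mk]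
    rw [p_succ n k h]
    push_cast
    ring_nf
    rw [show (2 : ZMod 2) = 0 from rfl, mul_zero, zero_add]

lemma Fk_zero : Fk 0 = 1 := by
  ext n
  simp only [Fk, PowerSeries.coeff_mk, PowerSeries.coeff_one]
  rcases eq_or_ne n 0 with h | h
  · simp [h, p_zero]
  · simp [h, p_nil n h]

lemma key_s11 (k : ℕ) : ((gp k : Polynomial (ZMod 2)) : PowerSeries (ZMod 2)) * Fk k = 1 := by
  induction k with
  | zero => simp [gp, Fk_zero]
  | succ k ih =>
      rw [gp, Finset.prod_range_succ, Polynomial.coe_mul, mul_assoc, step k]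
      exact ih

lemma gp_monic (k : ℕ) : (gp k).Monic := by
  apply Polynomial.monic_prod_of_monic
  intro i _
  have hdeg : (Polynomial.degree (1 : Polynomial (ZMod 2))) < ((i+1 : ℕ) : WithBot ℕ) :=
    Polynomial.degree_one_le.trans_lt (by exact_mod_cast Nat.zero_lt_succ i)
  exact Polynomial.monic_X_pow_add hdeg

lemma gp_natDegree (k : ℕ) : (gp k).natDegree = ∑ i ∈ Finset.range k, (i + 1) := by
  rw [gp]
  rw [Polynomial.natDegree_prod_of_monic]
  · apply Finset.sum_congr rfl
    intro i _
    have h1 : (Polynomial.X ^ (i+1) + 1 : Polynomial (ZMod 2)) = Polynomial.X ^ (i+1) + Polynomial.C 1 := by simp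
    rw [h1, Polynomial.natDegree_X_pow_add_C]
  · intro i _
    have hdeg : (Polynomial.degree (1 : Polynomial (ZMod 2))) < ((i+1 : ℕ) : WithBot ℕ) :=
      Polynomial.degree_one_le.trans_lt (by exact_mod_cast Nat.zero_lt_succ i)
    exact Polynomial.monic_X_pow_add hdeg

lemma gp_coeff_zero (k : ℕ) : (gp k).coeff 0 = 1 := by
  rw [Polynomial.coeff_zero_eq_eval_zero, gp, Polynomial.eval_prod]
  apply Finset.prod_eq_one
  intro i _
  simp [zero_pow (Nat.succ_ne_zero i)]

lemma gp_coeff_top (k : ℕ) : (gp k).coeff (∑ i ∈ Finset.range k, (i + 1)) = 1 := by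
  rw [← gp_natDegree k]
  exact (gp_monic k).coeff_natDegree





noncomputable def aa (k n : ℕ) : ZMod 2 := (p n k : ZMod 2)
noncomputable def gg (k j : ℕ) : ZMod 2 := (gp k).coeff j
def DD (k : ℕ) : ℕ := ∑ i ∈ Finset.range k, (i + 1)

lemma DD_pos (k : ℕ) (hk : 0 < k) : 1 ≤ DD k := by
  have : (0:ℕ) ∈ Finset.range k := Finset.mem_range.mpr hk
  have h2 := Finset.single_le_sum (f := fun i => i + 1) (fun i _ => Nat.zero_le _) this
  simpa [DD] using h2

lemma gg_zero (k : ℕ) : gg k 0 = 1 := gp_coeff_zero k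
lemma gg_top (k : ℕ) : gg k (DD k) = 1 := gp_coeff_top k
lemma gg_high (k j : ℕ) (h : DD k < j) : gg k j = 0 :=
  Polynomial.coeff_eq_zero_of_natDegree_lt (by rw [gp_natDegree]; exact h)

lemma coeffmul (k n : ℕ) (hn : n ≠ 0) :
    ∑ ij ∈ Finset.HasAntidiagonal.antidiagonal n, gg k ij.1 * aa k ij.2 = 0 := by
  have h := congrArg (PowerSeries.coeff n) (key_s11 k)
  rw [PowerSeries.coeff_mul, PowerSeries.coeff_one, if_neg hn] at h
  rw [← h]
  apply Finset.sum_congr rfl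
  intro ij _
  rw [gg, aa, Polynomial.coeff_coe, Fk, PowerSeries.coeff_mk]

lemma hsum (k m : ℕ) (hk : 0 < k) :
    ∑ i ∈ Finset.range (DD k + 1), gg k i * aa k (m + DD k - i) = 0 := by
  have hD := DD_pos k hk
  have h0 := coeffmul k (m + DD k) (by omega)
  rw [Finset.Nat.sum_antidiagonal_eq_sum_range_succ_mk] at h0
  rw [← h0]
  apply Finset.sum_subset
  · intro x hx
    simp only [Finset.mem_range] at hx ⊢
    omega
  · intro x _ hx
    simp only [Finset.mem_range] at hx
    rw [gg_high k x (by omega), zero_mul]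

lemma back_formula (k m : ℕ) (hk : 0 < k) :
    aa k m = ∑ i ∈ Finset.range (DD k), gg k i * aa k (m + DD k - i) := by
  have h := hsum k m hk
  rw [Finset.sum_range_succ, gg_top, one_mul, Nat.add_sub_cancel] at h
  have h2 := eq_neg_of_add_eq_zero_right h
  rwa [CharTwo.neg_eq] at h2

lemma fwd_formula (k m : ℕ) (hk : 0 < k) :
    aa k (m + DD k) = ∑ i ∈ Finset.range (DD k), gg k (i + 1) * aa k (m + DD k - (i + 1)) := by
  have h := hsum k m hk
  rw [Finset.sum_range_succ', gg_zero, one_mul, Nat.sub_zero] at h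
  have h2 := eq_neg_of_add_eq_zero_left h
  rw [CharTwo.neg_eq] at h2
  exact h2.symm

def W (k m m' : ℕ) : Prop := ∀ t, t < DD k → aa k (m + t) = aa k (m' + t)

lemma step_up (k m m' : ℕ) (hk : 0 < k) (h : W k m m') : W k (m + 1) (m' + 1) := by
  intro t ht
  rcases Nat.lt_or_ge (t + 1) (DD k) with h1 | h1
  · rw [show m + 1 + t = m + (t + 1) by ring, show m' + 1 + t = m' + (t + 1) by ring]
    exact h (t + 1) h1
  · have ht1 : t + 1 = DD k := by omega
    rw [show m + 1 + t = m + DD k by omega, show m' + 1 + t = m' + DD k by omega,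
      fwd_formula k m hk, fwd_formula k m' hk]
    apply Finset.sum_congr rfl
    intro i hi
    simp only [Finset.mem_range] at hi
    congr 1
    rw [show m + DD k - (i + 1) = m + (DD k - i - 1) by omega,
      show m' + DD k - (i + 1) = m' + (DD k - i - 1) by omega]
    exact h (DD k - i - 1) (by omega)

lemma step_down (k m m' : ℕ) (hk : 0 < k) (h : W k (m + 1) (m' + 1)) : W k m m' := by
  intro t ht
  match t with
  | 0 =>
    rw [Nat.add_zero, Nat.add_zero, back_formula k m hk, back_formula k m' hk]
    apply Finset.sum_congr rfl
    intro i hi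
    simp only [Finset.mem_range] at hi
    congr 1
    rw [show m + DD k - i = m + 1 + (DD k - i - 1) by omega,
      show m' + DD k - i = m' + 1 + (DD k - i - 1) by omega]
    exact h (DD k - i - 1) (by omega)
  | (t' + 1) =>
    rw [show m + (t' + 1) = m + 1 + t' by ring, show m' + (t' + 1) = m' + 1 + t' by ring]
    exact h t' (by omega)

lemma exists_period (k : ℕ) (hk : 0 < k) : ∃ T, 1 ≤ T ∧ ∀ n, aa k (n + T) = aa k n := by
  have hD := DD_pos k hk
  obtain ⟨m₁, m₂, hne, heq⟩ :=
    Finite.exists_ne_map_eq_of_infinite (fun m : ℕ => (fun t : Fin (DD k) => aa k (m + t)))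
  -- wlog m₁ < m₂
  obtain ⟨m, T, hT, hW0⟩ : ∃ m T, 1 ≤ T ∧ W k m (m + T) := by
    rcases Nat.lt_or_ge m₁ m₂ with h | h
    · refine ⟨m₁, m₂ - m₁, by omega, fun t ht => ?_⟩
      have := congrFun heq ⟨t, ht⟩
      simpa [Nat.add_sub_cancel' h.le] using this
    · have h' : m₂ < m₁ := by omega
      refine ⟨m₂, m₁ - m₂, by omega, fun t ht => ?_⟩
      have := congrFun heq ⟨t, ht⟩
      simp only at this
      rw [show m₂ + (m₁ - m₂) = m₁ by omega]
      exact this.symm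
  refine ⟨T, hT, fun n => ?_⟩
  have hup : ∀ j, W k (m + j) (m + T + j) := by
    intro j
    induction j with
    | zero => simpa using hW0
    | succ j ih =>
        have := step_up k (m + j) (m + T + j) hk ih
        rwa [show m + j + 1 = m + (j+1) by ring, show m + T + j + 1 = m + T + (j+1) by ring] at this
  have hdown : ∀ j, j ≤ m → W k (m - j) (m - j + T) := by
    intro j
    induction j with
    | zero => intro _; simpa using hW0
    | succ j ih =>
        intro hj
        have prev := ih (by omega)
        have e1 : m - j = (m - (j + 1)) + 1 := by omega
        rw [e1] at prev
        rw [show m - (j + 1) + 1 + T = ((m - (j + 1)) + T) + 1 by ring] at prev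
        exact step_down k _ _ hk prev
  have hall : ∀ r, W k r (r + T) := by
    intro r
    rcases Nat.lt_or_ge r m with h | h
    · have := hdown (m - r) (by omega)
      rwa [show m - (m - r) = r by omega] at this
    · have := hup (r - m)
      rwa [show m + (r - m) = r by omega, show m + T + (r - m) = r + T by omega] at this
  have := hall n 0 hD
  simpa using this.symm

lemma no_zero_window (k : ℕ) (hk : 0 < k) : ∀ m, ∃ t, t < DD k ∧ aa k (m + t) ≠ 0 := by
  have hD := DD_pos k hk
  have aux : ∀ m, (∀ t, t < DD k → aa k (m + t) = 0) → False := by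
    intro m
    induction m with
    | zero =>
        intro h
        have := h 0 hD
        rw [Nat.zero_add] at this
        rw [aa, p_zero] at this
        simp at this
    | succ m ih =>
        intro h
        have hm : aa k m = 0 := by
          rw [back_formula k m hk]
          apply Finset.sum_eq_zero
          intro i hi
          simp only [Finset.mem_range] at hi
          rw [show m + DD k - i = m + 1 + (DD k - i - 1) by omega,
            h (DD k - i - 1) (by omega), mul_zero]
        apply ih
        intro t ht
        match t with
        | 0 => simpa using hm
        | (t' + 1) =>
            rw [show m + (t' + 1) = m + 1 + t' by ring]
            exact h t' (by omega)
  intro m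
  by_contra hcon
  push_neg at hcon
  exact aux m hcon





lemma DD_eq (k : ℕ) : 2 * DD k = k * (k + 1) := by
  have h2 : DD k = ∑ i ∈ Finset.range (k + 1), i := by
    rw [DD, Finset.sum_range_succ' (fun i => i)]
    simp
  rw [h2, Nat.mul_comm 2 _, Finset.sum_range_id_mul_two, Nat.mul_comm]
  simp

lemma odd_iff_aa (k n : ℕ) : Odd (p n k) ↔ aa k n = 1 := by
  rw [Nat.odd_iff, aa]
  constructor
  · intro h
    rw [← ZMod.natCast_mod, h, Nat.cast_one]
  · intro h
    by_contra hne
    have h0 : p n k % 2 = 0 := by omega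
    rw [← ZMod.natCast_mod, h0, Nat.cast_zero] at h
    exact (by decide : (0 : ZMod 2) ≠ 1) h

set_option maxHeartbeats 2000000 in
theorem stmt_11 (k : ℕ) (hk : 0 < k) :
    ∃ d : ℝ, 2 / (k * (k + 1)) ≤ d ∧
      Filter.Tendsto
        (fun N : ℕ =>
          (((Finset.range (N + 1)).filter (fun n => Odd (p n k))).card : ℝ) / N)
        Filter.atTop (nhds d) := by
  classical
  obtain ⟨T, hT, hper⟩ := exists_period k hk
  have hD := DD_pos k hk
  set P : ℕ → Prop := fun n => Odd (p n k) with hP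
  have hPper : Function.Periodic P T := by
    intro n
    exact propext ((odd_iff_aa k (n + T)).trans (by rw [hper n]; exact (odd_iff_aa k n).symm))
  set c : ℕ := Nat.count P T with hc
  set cnt : ℕ → ℕ := fun m => ((Finset.range m).filter P).card with hcnt
  have cnt_T : cnt T = c := (Nat.count_eq_card_filter_range P T).symm
  have cnt_add : ∀ m, cnt (m + T) = cnt m + c := by
    intro m
    have hsplit : Finset.range (m + T) = Finset.range m ∪ Finset.Ico m (m + T) := by
      simp only [Finset.range_eq_Ico]
      exact (Finset.Ico_union_Ico_eq_Ico (Nat.zero_le m) (Nat.le_add_right m T)).symm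
    rw [hcnt]
    simp only
    rw [hsplit, Finset.filter_union, Finset.card_union_of_disjoint]
    · rw [Nat.filter_Ico_card_eq_of_periodic m T P hPper]
    · exact Finset.disjoint_filter_filter
        (by rw [Finset.range_eq_Ico]; exact Finset.Ico_disjoint_Ico_consecutive 0 m (m + T))
  have cnt_mul : ∀ q, cnt (q * T) = q * c := by
    intro q
    induction q with
    | zero => simp [hcnt]
    | succ q ih => rw [Nat.succ_mul, cnt_add, ih, Nat.succ_mul]
  have cnt_mono : ∀ {m m'}, m ≤ m' → cnt m ≤ cnt m' :=
    fun h => Finset.card_le_card (Finset.filter_subset_filter _ (Finset.range_subset_range.mpr h))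
  -- upper and lower bounds on cnt
  have cnt_ub : ∀ N, cnt N ≤ (N / T) * c + c := by
    intro N
    have h1 : N ≤ (N / T) * T + T := by
      calc N = T * (N / T) + N % T := (Nat.div_add_mod N T).symm
        _ ≤ T * (N / T) + T := Nat.add_le_add_left (Nat.mod_lt N (by omega)).le _
        _ = (N / T) * T + T := by ring
    calc cnt N ≤ cnt ((N / T) * T + T) := cnt_mono h1
      _ = cnt ((N / T + 1) * T) := by ring_nf
      _ = (N / T + 1) * c := cnt_mul _
      _ = (N / T) * c + c := by ring
  have cnt_lb : ∀ N, (N / T) * c ≤ cnt N := by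
    intro N
    have h1 : (N / T) * T ≤ N := Nat.div_mul_le_self N T
    calc (N / T) * c = cnt ((N / T) * T) := (cnt_mul _).symm
      _ ≤ cnt N := cnt_mono h1
  -- T ≤ DD k * c
  have hTD : T ≤ DD k * c := by
    have hinj : T ≤ cnt (DD k * T) := by
      have hmaps : ∀ i ∈ Finset.range T,
          (i * DD k + Classical.choose (no_zero_window k hk (i * DD k))) ∈
            (Finset.range (DD k * T)).filter P := by
        intro i hi
        simp only [Finset.mem_range] at hi
        obtain ⟨ht, hne⟩ := Classical.choose_spec (no_zero_window k hk (i * DD k))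
        rw [Finset.mem_filter, Finset.mem_range]
        constructor
        · calc i * DD k + _ < i * DD k + DD k := by omega
            _ = (i + 1) * DD k := by ring
            _ ≤ T * DD k := Nat.mul_le_mul_right _ (by omega)
            _ = DD k * T := Nat.mul_comm _ _
        · show Odd (p (i * DD k + Classical.choose (no_zero_window k hk (i * DD k))) k)
          rw [odd_iff_aa]
          have hx : ∀ x : ZMod 2, x ≠ 0 → x = 1 := by decide
          exact hx _ hne
      have hinj2 : Set.InjOn (fun i => i * DD k + Classical.choose (no_zero_window k hk (i * DD k)))
          (Finset.range T) := by
        intro i hi j hj hij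
        simp only at hij
        obtain ⟨hti, -⟩ := Classical.choose_spec (no_zero_window k hk (i * DD k))
        obtain ⟨htj, -⟩ := Classical.choose_spec (no_zero_window k hk (j * DD k))
        have hdiv : ∀ (a t : ℕ), t < DD k → (a * DD k + t) / DD k = a := by
          intro a t htlt
          rw [show a * DD k + t = t + DD k * a by ring, Nat.add_mul_div_left _ _ (by omega : 0 < DD k),
            Nat.div_eq_of_lt htlt, Nat.zero_add]
        have h1 := hdiv i _ hti
        have h2 := hdiv j _ htj
        rw [← h1, ← h2, hij]
      calc T = (Finset.range T).card := (Finset.card_range T).symm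
        _ ≤ ((Finset.range (DD k * T)).filter P).card := Finset.card_le_card_of_injOn _ hmaps hinj2
    have := cnt_mul (DD k)
    rw [this] at hinj
    omega
  -- the density
  refine ⟨(c : ℝ) / T, ?_, ?_⟩
  · -- 2/(k(k+1)) ≤ c/T
    have hTpos : (0:ℝ) < T := by exact_mod_cast (by omega : 0 < T)
    have hDpos : (0:ℝ) < DD k := by exact_mod_cast (by omega : 0 < DD k)
    have hkk : ((k:ℝ) * ((k:ℝ) + 1)) = 2 * (DD k : ℝ) := by
      exact_mod_cast (DD_eq k).symm
    rw [hkk, show (2:ℝ) / (2 * (DD k : ℝ)) = 1 / (DD k : ℝ) by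
      rw [div_eq_div_iff (by positivity) hDpos.ne']; ring]
    rw [div_le_div_iff₀ hDpos hTpos]
    have hTDR : (T:ℝ) ≤ (DD k : ℝ) * c := by exact_mod_cast hTD
    nlinarith
  · -- the limit
    have htend0 : Filter.Tendsto (fun N : ℕ => (2 * c : ℝ) / N) Filter.atTop (nhds 0) :=
      tendsto_const_div_atTop_nhds_zero_nat _
    have hlow : Filter.Tendsto (fun N : ℕ => (c : ℝ) / T - 2 * c / N) Filter.atTop
        (nhds ((c : ℝ) / T)) := by
      simpa using Filter.Tendsto.sub (tendsto_const_nhds (x := (c:ℝ)/T)) htend0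
    have hhigh : Filter.Tendsto (fun N : ℕ => (c : ℝ) / T + 2 * c / N) Filter.atTop
        (nhds ((c : ℝ) / T)) := by
      simpa using Filter.Tendsto.add (tendsto_const_nhds (x := (c:ℝ)/T)) htend0
    refine tendsto_of_tendsto_of_tendsto_of_le_of_le' hlow hhigh ?_ ?_
    · -- lower bound eventually
      filter_upwards [Filter.eventually_ge_atTop 1] with N hN
      set q := (N + 1) / T with hq
      have hN0 : (0:ℝ) < N := by exact_mod_cast (by omega : 0 < N)
      have hT0 : (0:ℝ) < T := by exact_mod_cast (by omega : 0 < T)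
      have f2 : N + 1 < q * T + T := by
        calc N + 1 = T * q + (N + 1) % T := (Nat.div_add_mod (N+1) T).symm
          _ < T * q + T := Nat.add_lt_add_left (Nat.mod_lt (N+1) (by omega)) _
          _ = q * T + T := by ring
      have f4 : q * c ≤ cnt (N + 1) := cnt_lb (N + 1)
      have hf2R : ((N:ℝ) + 1) < (q:ℝ) * T + T := by exact_mod_cast f2
      have hf4R : (q:ℝ) * c ≤ (cnt (N+1) : ℝ) := by exact_mod_cast f4
      have hcR : (0:ℝ) ≤ c := by positivity
      have hA : (c:ℝ) * ((N:ℝ) + 1) ≤ c * ((q:ℝ) * T + T) :=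
        mul_le_mul_of_nonneg_left hf2R.le hcR
      have hB : ((q:ℝ) * c) * T ≤ (cnt (N+1) : ℝ) * T :=
        mul_le_mul_of_nonneg_right hf4R hT0.le
      show (c : ℝ) / T - 2 * c / N ≤ ((Finset.range (N+1)).filter P).card / N
      have heq : (((Finset.range (N+1)).filter P).card : ℝ) = (cnt (N+1) : ℝ) := rfl
      rw [heq, sub_le_iff_le_add, ← add_div, div_le_div_iff₀ hT0 hN0]
      nlinarith [hA, hB]
    · -- upper bound eventually
      filter_upwards [Filter.eventually_ge_atTop 1] with N hN
      set q := (N + 1) / T with hq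
      have hN0 : (0:ℝ) < N := by exact_mod_cast (by omega : 0 < N)
      have hT0 : (0:ℝ) < T := by exact_mod_cast (by omega : 0 < T)
      have f1 : q * T ≤ N + 1 := Nat.div_mul_le_self (N+1) T
      have f3 : cnt (N + 1) ≤ q * c + c := cnt_ub (N + 1)
      have hf1R : (q:ℝ) * T ≤ (N:ℝ) + 1 := by exact_mod_cast f1
      have hf3R : (cnt (N+1) : ℝ) ≤ (q:ℝ) * c + c := by exact_mod_cast f3
      have hcR : (0:ℝ) ≤ c := by positivity
      have hTR : (1:ℝ) ≤ T := by exact_mod_cast hT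
      have hA2 : (c:ℝ) * ((q:ℝ) * T) ≤ c * ((N:ℝ) + 1) :=
        mul_le_mul_of_nonneg_left hf1R hcR
      have hB2 : (cnt (N+1) : ℝ) * T ≤ ((q:ℝ) * c + c) * T :=
        mul_le_mul_of_nonneg_right hf3R hT0.le
      have hcle : (c:ℝ) ≤ c * T := by nlinarith
      have hkey2 : (cnt (N+1) : ℝ) * T ≤ (c:ℝ) * N + 2 * c * T := by nlinarith [hA2, hB2]
      show (((Finset.range (N+1)).filter P).card : ℝ) / N ≤ (c : ℝ) / T + 2 * c / N
      have heq : (((Finset.range (N+1)).filter P).card : ℝ) = (cnt (N+1) : ℝ) := rfl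
      rw [heq, div_add_div _ _ hT0.ne' hN0.ne', div_le_div_iff₀ hN0 (by positivity)]
      have hC := mul_le_mul_of_nonneg_right hkey2 hN0.le
      nlinarith [hC]
end
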